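/- arXiv:2601.05592 — 5 statements merged into one kernel-verified Lean document; each statement's English description precedes it below -/
import Mathlib

section
/- The formal power series identity B_{2,2}(q) = ∏_{m≥3}(1+q^m) · (q² + 2q³ + q⁴ + q⁵ + q⁶)/(1−q²) holds, where B_{2,2}(q) = ∑ b_{2,2}(n) qⁿ. -/
open Finset PowerSeries

/-- The list of hook lengths of the Young diagram of a partition whose row
lengths (in nonincreasing order) are given by the list `l`.  The box in row `i`,
column `j` (both 0-indexed) has hook length `(l_i - j) + #{i' > i : j < l_{i'}}`. -/
def hookCount (l : List ℕ) (k : ℕ) : ℕ :=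
  ((Finset.range l.length ×ˢ Finset.range (l.getD 0 0)).filter
    (fun p => p.2 < l.getD p.1 0 ∧
      (l.getD p.1 0 - p.2) +
        ((List.range l.length).filter (fun i' => p.1 < i' ∧ p.2 < l.getD i' 0)).length = k)).card

/-- `b t k n` : the total number of boxes with hook length `k` among the Young
diagrams of all `t`-regular partitions of `n`. -/
def b (t k n : ℕ) : ℕ :=
  ∑ p ∈ Finset.univ.filter (fun p : n.Partition => ∀ i ∈ p.parts, ¬ t ∣ i),
    hookCount ((p.parts.sort (· ≤ ·)).reverse) k


def hooks : List ℕ → ℕ → ℕ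
  | [], _ => 0
  | v :: t, k =>
      ((Finset.range v).filter (fun j => (v - j) + t.countP (fun x => decide (j < x)) = k)).card
        + hooks t k

lemma filter_range_getD (t : List ℕ) (q : ℕ → Bool) :
    ((List.range t.length).filter (fun i => q (t.getD i 0))).length = t.countP q := by
  induction t with
  | nil => simp
  | cons a t ih =>
      rw [List.length_cons, List.range_succ_eq_map, List.countP_cons]
      simp only [List.filter_cons, List.getD_cons_zero, List.filter_map]
      cases h : q a <;>
        simp [List.length_map, Function.comp_def, ← ih, h, List.getD_cons_succ]

lemma hookCount_eq_sum (l : List ℕ) (k : ℕ) :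
    hookCount l k = ∑ i ∈ Finset.range l.length, ∑ j ∈ Finset.range (l.getD 0 0),
      if (j < l.getD i 0 ∧
          (l.getD i 0 - j) +
            ((List.range l.length).filter (fun i' => i < i' ∧ j < l.getD i' 0)).length = k)
      then 1 else 0 := by
  rw [hookCount, Finset.card_filter, Finset.sum_product]

lemma getD_le_head (t : List ℕ) (hs : t.Pairwise (fun a b => b ≤ a)) (i : ℕ) :
    t.getD i 0 ≤ t.getD 0 0 := by
  cases t with
  | nil => simp
  | cons a s =>
      cases i with
      | zero => exact le_rfl
      | succ i =>
          simp only [List.getD_cons_succ, List.getD_cons_zero]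
          by_cases h : i < s.length
          · rw [List.getD_eq_getElem s 0 h]
            exact List.rel_of_pairwise_cons hs (List.getElem_mem h)
          · rw [List.getD_eq_default s 0 (Nat.le_of_not_lt h)]
            exact Nat.zero_le _

lemma hookCount_cons (v : ℕ) (t : List ℕ) (k : ℕ)
    (ht : ∀ x ∈ t, x ≤ v) (hs : t.Pairwise (fun a b => b ≤ a)) :
    hookCount (v :: t) k =
      ((Finset.range v).filter
        (fun j => (v - j) + t.countP (fun x => decide (j < x)) = k)).card + hookCount t k := by
  rw [hookCount_eq_sum, hookCount_eq_sum]
  rw [List.length_cons, Finset.sum_range_succ']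
  simp only [List.getD_cons_zero, List.getD_cons_succ]
  have leg0 : ∀ j : ℕ,
      ((List.range (t.length + 1)).filter
        (fun i' => decide (0 < i' ∧ j < (v :: t).getD i' 0))).length
        = t.countP (fun x => decide (j < x)) := by
    intro j
    rw [List.range_succ_eq_map, List.filter_cons]
    simp only [decide_eq_true_eq, Nat.lt_irrefl, false_and, if_false, List.filter_map,
      List.length_map]
    rw [← filter_range_getD t (fun x => decide (j < x))]
    congr 1
    apply List.filter_congr
    intro i _
    simp [List.getD_cons_succ]
  have legS : ∀ i j : ℕ,
      ((List.range (t.length + 1)).filter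
        (fun i' => decide (i + 1 < i' ∧ j < (v :: t).getD i' 0))).length
        = ((List.range t.length).filter (fun i' => decide (i < i' ∧ j < t.getD i' 0))).length := by
    intro i j
    rw [List.range_succ_eq_map, List.filter_cons]
    simp only [decide_eq_true_eq, Nat.not_lt_zero, false_and, if_false, List.filter_map,
      List.length_map]
    congr 1
    apply List.filter_congr
    intro i' _
    simp [List.getD_cons_succ, Nat.succ_lt_succ_iff]
  simp only [leg0, legS]
  rw [add_comm]
  congr 1
  · rw [Finset.card_filter]
    apply Finset.sum_congr rfl
    intro x hx
    rw [Finset.mem_range] at hx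
    simp [hx]
  · apply Finset.sum_congr rfl
    intro i _
    have hle : t.getD 0 0 ≤ v := by
      cases t with
      | nil => simp
      | cons a t => exact ht a (by simp)
    rw [Finset.sum_subset (Finset.range_subset_range.mpr hle)]
    intro j hj hj2
    rw [Finset.mem_range] at hj hj2
    have : ¬ j < t.getD i 0 := by
      intro hc
      exact hj2 (lt_of_lt_of_le hc (getD_le_head t hs i))
    exact if_neg (fun h => this h.1)

lemma hookCount_eq_hooks (l : List ℕ) (hs : l.Pairwise (fun a b => b ≤ a)) (k : ℕ) :
    hookCount l k = hooks l k := by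
  induction l with
  | nil => simp [hookCount, hooks]
  | cons v t ih =>
      rw [hookCount_cons v t k (fun x hx => List.rel_of_pairwise_cons hs hx) hs.of_cons, hooks,
        ih hs.of_cons]



-- head contribution
lemma head_contrib (v : ℕ) (t : List ℕ) (hv : v % 2 = 1) (ht : ∀ x ∈ t, x ≤ v)
    (hodd : ∀ x ∈ t, x % 2 = 1) :
    ((Finset.range v).filter (fun j => (v - j) + t.countP (fun x => decide (j < x)) = 2)).card
      = (if t.count v = 1 then 1 else 0) + (if t.count v = 0 ∧ 3 ≤ v then 1 else 0) := by
  have ha : t.countP (fun x => decide (v - 1 < x)) = t.count v := by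
    rw [List.count, List.countP_congr]
    intro x hx
    have h1 := ht x hx
    simp only [decide_eq_true_eq, beq_iff_eq]
    constructor
    · intro h; omega
    · intro h; omega
  have hb : 3 ≤ v → t.countP (fun x => decide (v - 2 < x)) = t.count v := by
    intro h3
    rw [List.count, List.countP_congr]
    intro x hx
    have h1 := ht x hx
    have h2 := hodd x hx
    simp only [decide_eq_true_eq, beq_iff_eq]
    constructor
    · intro h; omega
    · intro h; omega
  have key : ∀ j, j < v → ((v - j) + t.countP (fun x => decide (j < x)) = 2 ↔
      (j = v - 1 ∧ t.count v = 1) ∨ (j = v - 2 ∧ t.count v = 0 ∧ 3 ≤ v)) := by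
    intro j hj
    rcases Nat.lt_or_ge j (v - 2) with h | h
    · constructor
      · intro hc; omega
      · intro hc; omega
    · rcases Nat.lt_or_ge j (v - 1) with h' | h'
      · -- j = v - 2, needs v ≥ 2 hence 3 ≤ v by oddness
        have hj2 : j = v - 2 := by omega
        have h3 : 3 ≤ v := by omega
        subst hj2
        rw [hb h3]
        constructor
        · intro hc
          exact Or.inr ⟨rfl, by omega, h3⟩
        · rintro (⟨h1, _⟩ | ⟨_, h2, _⟩) <;> omega
      · have hj1 : j = v - 1 := by omega
        subst hj1
        rw [ha]
        constructor
        · intro hc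
          exact Or.inl ⟨rfl, by omega⟩
        · rintro (⟨_, h1⟩ | ⟨h1, h2, h3⟩) <;> omega
  have hfe : (Finset.range v).filter
      (fun j => (v - j) + t.countP (fun x => decide (j < x)) = 2) =
      (Finset.range v).filter (fun j =>
        (j = v - 1 ∧ t.count v = 1) ∨ (j = v - 2 ∧ t.count v = 0 ∧ 3 ≤ v)) := by
    apply Finset.filter_congr
    intro j hj
    rw [Finset.mem_range] at hj
    exact key j hj
  rw [hfe]
  by_cases h1 : t.count v = 1
  · rw [if_pos h1]
    have : (Finset.range v).filter (fun j =>
        (j = v - 1 ∧ t.count v = 1) ∨ (j = v - 2 ∧ t.count v = 0 ∧ 3 ≤ v)) = {v - 1} := by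
      ext j
      simp only [Finset.mem_filter, Finset.mem_range, Finset.mem_singleton]
      constructor
      · rintro ⟨_, (⟨h, _⟩ | ⟨_, h0, _⟩)⟩
        · exact h
        · omega
      · rintro rfl
        exact ⟨by omega, Or.inl ⟨rfl, h1⟩⟩
    rw [this]
    simp only [Finset.card_singleton]
    rw [if_neg (by omega)]
  · rw [if_neg h1]
    by_cases h2 : t.count v = 0 ∧ 3 ≤ v
    · rw [if_pos h2]
      have : (Finset.range v).filter (fun j =>
          (j = v - 1 ∧ t.count v = 1) ∨ (j = v - 2 ∧ t.count v = 0 ∧ 3 ≤ v)) = {v - 2} := by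
        ext j
        simp only [Finset.mem_filter, Finset.mem_range, Finset.mem_singleton]
        constructor
        · rintro ⟨_, (⟨_, h⟩ | ⟨h, _⟩)⟩
          · omega
          · exact h
        · rintro rfl
          exact ⟨by omega, Or.inr ⟨rfl, h2⟩⟩
      rw [this]
      simp
    · rw [if_neg h2]
      have : (Finset.range v).filter (fun j =>
          (j = v - 1 ∧ t.count v = 1) ∨ (j = v - 2 ∧ t.count v = 0 ∧ 3 ≤ v)) = ∅ := by
        ext j
        simp only [Finset.mem_filter, Finset.mem_range, Finset.notMem_empty, iff_false]
        rintro ⟨_, (⟨_, h⟩ | ⟨_, h, h3⟩)⟩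
        · exact h1 h
        · exact h2 ⟨h, h3⟩
      rw [this]
      simp

lemma countA_insert (v : ℕ) (t : List ℕ) :
    ((insert v t.toFinset).filter (fun w => 3 ≤ w)).card
      = (t.toFinset.filter (fun w => 3 ≤ w)).card + (if t.count v = 0 ∧ 3 ≤ v then 1 else 0) := by
  by_cases hc : t.count v = 0
  · have hv : v ∉ t.toFinset := by
      rw [List.mem_toFinset]
      exact List.count_eq_zero.mp hc
    rw [Finset.filter_insert]
    by_cases h3 : 3 ≤ v
    · rw [if_pos h3, Finset.card_insert_of_notMem (fun h => hv (Finset.filter_subset _ _ h)),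
        if_pos ⟨hc, h3⟩]
    · rw [if_neg h3, if_neg (fun h => h3 h.2), add_zero]
  · have hv : v ∈ t.toFinset := by
      rw [List.mem_toFinset]
      exact List.count_pos_iff.mp (Nat.pos_of_ne_zero hc)
    rw [Finset.insert_eq_self.mpr hv, if_neg (fun h => hc h.1), add_zero]

lemma countB_insert (v : ℕ) (t : List ℕ) :
    ((insert v t.toFinset).filter (fun w => 2 ≤ (v :: t).count w)).card
      = (t.toFinset.filter (fun w => 2 ≤ t.count w)).card
        + (if t.count v = 1 then 1 else 0) := by
  have hcc : ∀ w, (v :: t).count w = t.count w + (if w = v then 1 else 0) := by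
    intro w
    rw [List.count_cons]
    congr 1
    rcases eq_or_ne w v with h | h
    · simp [h]
    · simp [h, Ne.symm h]
  rcases Nat.lt_or_ge (t.count v) 1 with hc | hc
  · -- count v = 0
    have hc0 : t.count v = 0 := by omega
    have hv : v ∉ t.toFinset := by
      rw [List.mem_toFinset]; exact List.count_eq_zero.mp hc0
    rw [Finset.filter_insert, if_neg (by rw [hcc, hc0, if_pos rfl]; norm_num), if_neg (by omega)]
    rw [add_zero]
    congr 1
    apply Finset.filter_congr
    intro w hw
    rw [List.mem_toFinset] at hw
    have hwv : w ≠ v := fun h => by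
      subst h; exact (List.count_eq_zero.mp hc0) hw
    rw [hcc, if_neg hwv, add_zero]
  · rcases Nat.lt_or_ge (t.count v) 2 with hc1 | hc2
    · -- count v = 1
      have h1 : t.count v = 1 := by omega
      have hv : v ∈ t.toFinset := by
        rw [List.mem_toFinset]; exact List.count_pos_iff.mp hc
      rw [Finset.insert_eq_self.mpr hv, if_pos h1]
      have : t.toFinset.filter (fun w => 2 ≤ (v :: t).count w)
          = insert v (t.toFinset.filter (fun w => 2 ≤ t.count w)) := by
        ext w
        simp only [Finset.mem_filter, Finset.mem_insert]
        by_cases hwv : w = v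
        · rw [hwv]
          have h2 : List.count v (v :: t) = 2 := by rw [hcc, h1, if_pos rfl]
          simp [h2, hv, h1]
        · rw [hcc, if_neg hwv, add_zero]
          constructor
          · intro h; exact Or.inr h
          · rintro (h | h)
            · exact absurd h hwv
            · exact h
      rw [this, Finset.card_insert_of_notMem (by
        simp only [Finset.mem_filter]
        rintro ⟨_, h⟩
        omega)]
    · -- count v ≥ 2
      have hv : v ∈ t.toFinset := by
        rw [List.mem_toFinset]; exact List.count_pos_iff.mp hc
      rw [Finset.insert_eq_self.mpr hv, if_neg (by omega), add_zero]
      congr 1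
      apply Finset.filter_congr
      intro w hw
      rw [hcc]
      by_cases hwv : w = v
      · subst hwv
        simp only [if_pos rfl]
        constructor <;> intro _ <;> omega
      · rw [if_neg hwv, add_zero]

lemma hooks_closed (l : List ℕ) (hs : l.Pairwise (fun a b => b ≤ a))
    (hodd : ∀ x ∈ l, x % 2 = 1) :
    hooks l 2 = (l.toFinset.filter (fun v => 3 ≤ v)).card
      + (l.toFinset.filter (fun v => 2 ≤ l.count v)).card := by
  induction l with
  | nil => simp [hooks]
  | cons v t ih =>
      have ht : ∀ x ∈ t, x ≤ v := fun x hx => List.rel_of_pairwise_cons hs hx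
      have hoddt : ∀ x ∈ t, x % 2 = 1 := fun x hx => hodd x (List.mem_cons_of_mem _ hx)
      rw [hooks, head_contrib v t (hodd v List.mem_cons_self) ht hoddt, ih hs.of_cons hoddt,
        List.toFinset_cons, countA_insert, countB_insert]
      ring


lemma card_filter_le_parts (n : ℕ) (m : Multiset ℕ) (hm : ∀ x ∈ m, ¬Even x)
    (hmpos : ∀ x ∈ m, 0 < x) (hs : m.sum ≤ n) :
    #((Nat.Partition.odds n).filter (fun p => m ≤ p.parts)) =
      #(Nat.Partition.odds (n - m.sum)) := by
  apply Finset.card_bij'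
    (i := fun p hp => ⟨p.parts - m,
      fun {i} hi => p.parts_pos (Multiset.mem_of_le (Multiset.sub_le_self _ _) hi), by
        have hle : m ≤ p.parts := by
          simp only [Nat.Partition.odds, Nat.Partition.restricted, Finset.mem_filter] at hp
          exact hp.2
        have := tsub_add_cancel_of_le hle
        have hsum : (p.parts - m).sum + m.sum = n := by
          rw [← Multiset.sum_add, this, p.parts_sum]
        omega⟩)
    (j := fun q hq => ⟨q.parts + m,
      fun {i} hi => by
        rcases Multiset.mem_add.mp hi with h | h
        · exact q.parts_pos h
        · exact hmpos i h, by
        rw [Multiset.sum_add, q.parts_sum]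
        omega⟩)
  case hi =>
    intro p hp
    simp only [Nat.Partition.odds, Nat.Partition.restricted, Finset.mem_filter, Finset.mem_univ, true_and] at hp ⊢
    intro i hi
    exact hp.1 i (Multiset.mem_of_le (Multiset.sub_le_self _ _) hi)
  case hj =>
    intro q hq
    simp only [Nat.Partition.odds, Nat.Partition.restricted, Finset.mem_filter, Finset.mem_univ, true_and] at hq ⊢
    constructor
    · intro i hi
      rcases Multiset.mem_add.mp hi with h | h
      · exact hq i h
      · exact hm i h
    · exact Multiset.le_add_left _ _
  case left_inv =>
    intro p hp
    simp only [Nat.Partition.odds, Finset.mem_filter, Finset.mem_univ, true_and] at hp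
    apply Nat.Partition.ext
    simp only
    exact tsub_add_cancel_of_le hp.2
  case right_inv =>
    intro q hq
    apply Nat.Partition.ext
    simp only
    exact add_tsub_cancel_right _ _

section P4
open Finset

def podd (n : ℕ) : ℕ := (Nat.Partition.odds n).card

lemma part_le {n : ℕ} (p : n.Partition) {v : ℕ} (hv : v ∈ p.parts) : v ≤ n := by
  have := Multiset.single_le_sum (fun x _ => Nat.zero_le x) v hv
  rwa [p.parts_sum] at this

lemma b22_eq_sum (n : ℕ) :
    b 2 2 n = ∑ p ∈ Nat.Partition.odds n,
      ((p.parts.toFinset.filter (fun v => 3 ≤ v)).card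
        + (p.parts.toFinset.filter (fun v => 2 ≤ p.parts.count v)).card) := by
  rw [b]
  have hset : Finset.univ.filter (fun p : n.Partition => ∀ i ∈ p.parts, ¬ 2 ∣ i)
      = Nat.Partition.odds n := by
    rw [Nat.Partition.odds, Nat.Partition.restricted]
    apply Finset.filter_congr
    intro p _
    constructor
    · intro h i hi
      rw [even_iff_two_dvd]
      exact h i hi
    · intro h i hi
      rw [← even_iff_two_dvd]
      exact h i hi
  rw [hset]
  apply Finset.sum_congr rfl
  intro p hp
  simp only [Nat.Partition.odds, Nat.Partition.restricted, Finset.mem_filter] at hp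
  set l := (p.parts.sort (· ≤ ·)).reverse with hl
  have hsort : l.Pairwise (fun a b => b ≤ a) := by
    rw [hl]
    rw [List.pairwise_reverse]
    exact p.parts.pairwise_sort (· ≤ ·)
  have hmem : ∀ x ∈ l, x ∈ p.parts := by
    intro x hx
    rw [hl, List.mem_reverse] at hx
    rwa [← Multiset.mem_sort (· ≤ ·)]
  have hodd : ∀ x ∈ l, x % 2 = 1 := by
    intro x hx
    have := hp.2 x (hmem x hx)
    rwa [Nat.not_even_iff] at this
  rw [hookCount_eq_hooks l hsort 2, hooks_closed l hsort hodd]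
  have htf : l.toFinset = p.parts.toFinset := by
    rw [hl, List.toFinset_reverse]
    have : (↑(p.parts.sort (· ≤ ·)) : Multiset ℕ) = p.parts := p.parts.sort_eq (· ≤ ·)
    rw [show p.parts.toFinset = (↑(p.parts.sort (· ≤ ·)) : Multiset ℕ).toFinset from by rw [this]]
    rfl
  have hcnt : ∀ v, l.count v = p.parts.count v := by
    intro v
    rw [hl, List.count_reverse, ← Multiset.coe_count,
      p.parts.sort_eq (· ≤ ·)]
  congr 1
  · rw [htf]
  · rw [htf]
    congr 1
    apply Finset.filter_congr
    intro v _
    rw [hcnt]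
end P4

section P5
open Finset

lemma card_mem_part (n v : ℕ) (hv : ¬Even v) (hvn : v ≤ n) :
    #((Nat.Partition.odds n).filter (fun p => v ∈ p.parts)) = podd (n - v) := by
  have hpos : 0 < v := by
    rcases Nat.eq_zero_or_pos v with h | h
    · exact absurd (h ▸ Even.zero) hv
    · exact h
  have := card_filter_le_parts n {v} (fun x hx => by rwa [Multiset.mem_singleton.mp hx])
    (fun x hx => by rwa [Multiset.mem_singleton.mp hx]) (by simpa using hvn)
  rw [show ({v} : Multiset ℕ).sum = v from by simp] at this
  rw [podd, ← this]
  congr 1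
  apply Finset.filter_congr
  intro p _
  rw [← Multiset.singleton_le]

lemma card_two_part (n v : ℕ) (hv : ¬Even v) (hvn : 2 * v ≤ n) :
    #((Nat.Partition.odds n).filter (fun p => 2 ≤ p.parts.count v)) = podd (n - 2 * v) := by
  have hpos : 0 < v := by
    rcases Nat.eq_zero_or_pos v with h | h
    · exact absurd (h ▸ Even.zero) hv
    · exact h
  have hsum : (Multiset.replicate 2 v).sum = 2 * v := by
    rw [Multiset.sum_replicate]; simp
  have := card_filter_le_parts n (Multiset.replicate 2 v)
    (fun x hx => by rwa [Multiset.eq_of_mem_replicate hx])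
    (fun x hx => by rwa [Multiset.eq_of_mem_replicate hx]) (by rwa [hsum])
  rw [hsum] at this
  rw [podd, ← this]
  congr 1
  apply Finset.filter_congr
  intro p _
  rw [Multiset.le_count_iff_replicate_le]

lemma b22_formula (n : ℕ) :
    b 2 2 n = (∑ v ∈ range (n + 1), if ¬Even v ∧ 3 ≤ v then podd (n - v) else 0)
      + (∑ j ∈ range (n + 1), if j % 4 = 2 then podd (n - j) else 0) := by
  rw [b22_eq_sum, Finset.sum_add_distrib]
  congr 1
  · -- part A
    have step1 : ∀ p ∈ Nat.Partition.odds n,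
        #(p.parts.toFinset.filter (fun v => 3 ≤ v)) =
          ∑ v ∈ range (n + 1), if v ∈ p.parts ∧ 3 ≤ v then 1 else 0 := by
      intro p _
      rw [← Finset.card_filter]
      congr 1
      ext v
      simp only [Finset.mem_filter, Finset.mem_range, Multiset.mem_toFinset]
      constructor
      · rintro ⟨h1, h2⟩; exact ⟨Nat.lt_succ_of_le (part_le p h1), h1, h2⟩
      · rintro ⟨_, h2, h3⟩; exact ⟨h2, h3⟩
    rw [Finset.sum_congr rfl step1, Finset.sum_comm]
    apply Finset.sum_congr rfl
    intro v hv
    rw [Finset.mem_range] at hv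
    by_cases h3 : 3 ≤ v
    · by_cases he : Even v
      · rw [if_neg (fun h => h.1 he)]
        apply Finset.sum_eq_zero
        intro p hp
        simp only [Nat.Partition.odds, Nat.Partition.restricted, Finset.mem_filter] at hp
        rw [if_neg (fun h => hp.2 v h.1 he)]
      · rw [if_pos ⟨he, h3⟩, ← card_mem_part n v he (by omega), Finset.card_filter]
        apply Finset.sum_congr rfl
        intro p _
        congr 1
        simp [h3]
    · rw [if_neg (fun h => h3 h.2)]
      apply Finset.sum_eq_zero
      intro p _
      rw [if_neg (fun h => h3 h.2)]
  · -- part B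
    have step1 : ∀ p ∈ Nat.Partition.odds n,
        #(p.parts.toFinset.filter (fun v => 2 ≤ p.parts.count v)) =
          ∑ v ∈ range (n + 1), if 2 ≤ p.parts.count v then 1 else 0 := by
      intro p _
      rw [← Finset.card_filter]
      congr 1
      ext v
      simp only [Finset.mem_filter, Finset.mem_range, Multiset.mem_toFinset]
      constructor
      · rintro ⟨h1, h2⟩; exact ⟨Nat.lt_succ_of_le (part_le p h1), h2⟩
      · rintro ⟨_, h2⟩
        refine ⟨?_, h2⟩
        rw [← Multiset.count_pos]
        omega
    rw [Finset.sum_congr rfl step1, Finset.sum_comm]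
    have step2 : ∀ v ∈ range (n + 1),
        (∑ p ∈ Nat.Partition.odds n, if 2 ≤ p.parts.count v then 1 else 0)
          = if ¬Even v ∧ 2 * v ≤ n then podd (n - 2 * v) else 0 := by
      intro v _
      by_cases he : Even v
      · rw [if_neg (fun h => h.1 he)]
        apply Finset.sum_eq_zero
        intro p hp
        simp only [Nat.Partition.odds, Nat.Partition.restricted, Finset.mem_filter] at hp
        rw [if_neg]
        intro h
        exact hp.2 v (by rw [← Multiset.count_pos]; omega) he
      · by_cases h2 : 2 * v ≤ n
        · rw [if_pos ⟨he, h2⟩, ← card_two_part n v he h2, Finset.card_filter]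
        · rw [if_neg (fun h => h2 h.2)]
          apply Finset.sum_eq_zero
          intro p _
          rw [if_neg]
          intro h
          apply h2
          have hle : Multiset.replicate 2 v ≤ p.parts :=
            Multiset.le_count_iff_replicate_le.mp h
          obtain ⟨u, hu⟩ := Multiset.le_iff_exists_add.mp hle
          have hps := p.parts_sum
          rw [hu, Multiset.sum_add, Multiset.sum_replicate] at hps
          simp only [smul_eq_mul] at hps
          omega
    rw [Finset.sum_congr rfl step2]
    -- reindex v ↦ 2v
    rw [← Finset.sum_filter, ← Finset.sum_filter]
    apply Finset.sum_nbij' (i := fun v => 2 * v) (j := fun j => j / 2)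
    · intro v hv
      simp only [Finset.mem_filter, Finset.mem_range] at hv ⊢
      have hodd := hv.2.1
      rw [Nat.even_iff] at hodd
      refine ⟨by omega, by omega⟩
    · intro j hj
      simp only [Finset.mem_filter, Finset.mem_range] at hj ⊢
      refine ⟨by omega, ?_, by omega⟩
      rw [Nat.even_iff]
      omega
    · intro v hv
      simp only [Finset.mem_filter, Finset.mem_range] at hv
      omega
    · intro j hj
      simp only [Finset.mem_filter, Finset.mem_range] at hj
      omega
    · intro v hv
      rfl
end P5

open PowerSeries

namespace Theorems100

noncomputable section

variable {α : Type*}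

open Finset

open scoped Classical

/-- The partial product for the generating function for odd partitions.
TODO: As `m` tends to infinity, this converges (in the `X`-adic topology).

If `m` is sufficiently large, the `i`th coefficient gives the number of odd partitions of the
natural number `i`: proved in `oddGF_prop`.
It is stated for an arbitrary field `α`, though it usually suffices to use `ℚ` or `ℝ`.
-/
def partialOddGF (m : ℕ) [Field α] :=
  ∏ i ∈ range m, (1 - (X : PowerSeries α) ^ (2 * i + 1))⁻¹

/-- The partial product for the generating function for distinct partitions.
TODO: As `m` tends to infinity, this converges (in the `X`-adic topology).

If `m` is sufficiently large, the `i`th coefficient gives the number of distinct partitions of the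
natural number `i`: proved in `distinctGF_prop`.
It is stated for an arbitrary commutative semiring `α`, though it usually suffices to use `ℕ`, `ℚ`
or `ℝ`.
-/
def partialDistinctGF (m : ℕ) [CommSemiring α] :=
  ∏ i ∈ range m, (1 + (X : PowerSeries α) ^ (i + 1))

open Finset.HasAntidiagonal

universe u
variable {ι : Type u}

/-- A convenience constructor for the power series whose coefficients indicate a subset. -/
def indicatorSeries (α : Type*) [Semiring α] (s : Set ℕ) : PowerSeries α :=
  PowerSeries.mk fun n => if n ∈ s then 1 else 0

theorem coeff_indicator (s : Set ℕ) [Semiring α] (n : ℕ) :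
    coeff (R := α) n (indicatorSeries _ s) = if n ∈ s then 1 else 0 :=
  coeff_mk _ _

theorem coeff_indicator_pos (s : Set ℕ) [Semiring α] (n : ℕ) (h : n ∈ s) :
    coeff (R := α) n (indicatorSeries _ s) = 1 := by rw [coeff_indicator, if_pos h]

theorem coeff_indicator_neg (s : Set ℕ) [Semiring α] (n : ℕ) (h : n ∉ s) :
    coeff (R := α) n (indicatorSeries _ s) = 0 := by rw [coeff_indicator, if_neg h]

theorem constantCoeff_indicator (s : Set ℕ) [Semiring α] :
    constantCoeff (R := α) (indicatorSeries _ s) = if 0 ∈ s then 1 else 0 :=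
  rfl

theorem two_series (i : ℕ) [Semiring α] :
    1 + (X : PowerSeries α) ^ i.succ = indicatorSeries α {0, i.succ} := by
  ext n
  simp only [coeff_indicator, coeff_one, coeff_X_pow, Set.mem_insert_iff, Set.mem_singleton_iff,
    map_add]
  cases' n with d
  · simp [(Nat.succ_ne_zero i).symm]
  · simp [Nat.succ_ne_zero d]

theorem num_series' [Field α] (i : ℕ) :
    (1 - (X : PowerSeries α) ^ (i + 1))⁻¹ = indicatorSeries α {k | i + 1 ∣ k} := by
  rw [PowerSeries.inv_eq_iff_mul_eq_one]
  · ext n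
    cases n with
    | zero => simp [mul_sub, zero_pow, constantCoeff_indicator]
    | succ n =>
      simp only [coeff_one, if_false, mul_sub, mul_one, coeff_indicator,
        LinearMap.map_sub, reduceCtorEq]
      simp_rw [coeff_mul, coeff_X_pow, coeff_indicator, @boole_mul _ _ _ _]
      simp only [Set.mem_setOf_eq]
      erw [sum_ite, sum_ite]
      simp_rw [@filter_filter _ _ _ _ _, sum_const_zero, add_zero, sum_const, nsmul_eq_mul, mul_one,
        sub_eq_iff_eq_add, zero_add]
      symm
      split_ifs with h
      · suffices #{a ∈ antidiagonal (n + 1) | i + 1 ∣ a.fst ∧ a.snd = i + 1} = 1 by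
          convert congr_arg ((↑) : ℕ → α) this; norm_cast
        rw [card_eq_one]
        cases' h with p hp
        refine ⟨((i + 1) * (p - 1), i + 1), ?_⟩
        ext ⟨a₁, a₂⟩
        simp only [mem_filter, Prod.mk_inj, Finset.HasAntidiagonal.mem_antidiagonal, mem_singleton]
        constructor
        · rintro ⟨a_left, ⟨a, rfl⟩, rfl⟩
          refine ⟨?_, rfl⟩
          rw [Nat.mul_sub_left_distrib, ← hp, ← a_left, mul_one, Nat.add_sub_cancel]
        · rintro ⟨rfl, rfl⟩
          match p with
          | 0 => rw [mul_zero] at hp; cases hp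
          | p + 1 => rw [hp]; simp [mul_add]
      · suffices #{a ∈ antidiagonal (n + 1) | i + 1 ∣ a.fst ∧ a.snd = i + 1} = 0 by
          convert congr_arg ((↑) : ℕ → α) this; norm_cast
        rw [card_eq_zero]
        apply eq_empty_of_forall_notMem
        simp only [Prod.forall, mem_filter, not_and, Finset.HasAntidiagonal.mem_antidiagonal]
        rintro _ h₁ h₂ ⟨a, rfl⟩ rfl
        apply h
        simp [← h₂]
  · simp [zero_pow]

def mkOdd : ℕ ↪ ℕ :=
  ⟨fun i => 2 * i + 1, fun x y h => by linarith⟩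

-- The main workhorse of the partition theorem proof.
theorem partialGF_prop (α : Type*) [CommSemiring α] (n : ℕ) (s : Finset ℕ) (hs : ∀ i ∈ s, 0 < i)
    (c : ℕ → Set ℕ) (hc : ∀ i, i ∉ s → 0 ∈ c i) :
    #{p : n.Partition | (∀ j, p.parts.count j ∈ c j) ∧ ∀ j ∈ p.parts, j ∈ s} =
      coeff (R := α) n (∏ i ∈ s, indicatorSeries α ((· * i) '' c i)) := by
  simp_rw [coeff_prod, coeff_indicator, prod_boole, sum_boole]
  apply congr_arg
  simp only [mem_univ, forall_true_left, not_and, not_forall, exists_prop,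
    Set.mem_image, not_exists]
  set φ : (a : Nat.Partition n) →
    a ∈ filter (fun p ↦ (∀ (j : ℕ), Multiset.count j p.parts ∈ c j) ∧ ∀ j ∈ p.parts, j ∈ s) univ →
    ℕ →₀ ℕ := fun p _ => {
      toFun := fun i => Multiset.count i p.parts • i
      support := Finset.filter (fun i => i ≠ 0) p.parts.toFinset
      mem_support_toFun := fun a => by
        simp only [smul_eq_mul, ne_eq, mul_eq_zero, Multiset.count_eq_zero]
        rw [not_or, not_not]
        simp only [Multiset.mem_toFinset, not_not, mem_filter] }
  refine Finset.card_bij φ ?_ ?_ ?_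
  · intro a ha
    simp only [φ, not_forall, not_exists, not_and, exists_prop, mem_filter]
    rw [mem_finsuppAntidiag]
    dsimp only [ne_eq, smul_eq_mul, id_eq, eq_mpr_eq_cast, le_eq_subset, Finsupp.coe_mk]
    simp only [mem_univ, forall_true_left, not_and, not_forall, exists_prop,
      mem_filter, true_and] at ha
    refine ⟨⟨?_, fun i ↦ ?_⟩, fun i _ ↦ ⟨a.parts.count i, ha.1 i, rfl⟩⟩
    · conv_rhs => simp [← a.parts_sum]
      rw [sum_multiset_count_of_subset _ s]
      · simp only [smul_eq_mul]
      · intro i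
        simp only [Multiset.mem_toFinset, not_not, mem_filter]
        apply ha.2
    · simp only [ne_eq, Multiset.mem_toFinset, not_not, mem_filter, and_imp]
      exact fun hi _ ↦ ha.2 i hi
  · intro p₁ hp₁ p₂ hp₂ h
    apply Nat.Partition.ext
    simp only [true_and, mem_univ, mem_filter] at hp₁ hp₂
    ext i
    simp only [φ, ne_eq, Multiset.mem_toFinset, not_not, smul_eq_mul, Finsupp.mk.injEq] at h
    by_cases hi : i = 0
    · rw [hi]
      rw [Multiset.count_eq_zero_of_notMem]
      · rw [Multiset.count_eq_zero_of_notMem]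
        intro a; exact Nat.lt_irrefl 0 (hs 0 (hp₂.2 0 a))
      intro a; exact Nat.lt_irrefl 0 (hs 0 (hp₁.2 0 a))
    · rw [← mul_left_inj' hi]
      rw [funext_iff] at h
      exact h.2 i
  · simp only [φ, mem_filter, mem_finsuppAntidiag, mem_univ, exists_prop, true_and, and_assoc]
    rintro f ⟨hf, hf₃, hf₄⟩
    have hf' : f ∈ finsuppAntidiag s n := mem_finsuppAntidiag.mpr ⟨hf, hf₃⟩
    simp only [mem_finsuppAntidiag] at hf'
    refine ⟨⟨∑ i ∈ s, Multiset.replicate (f i / i) i, ?_, ?_⟩, ?_, ?_, ?_⟩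
    · intro i hi
      simp only [exists_prop, Multiset.mem_sum, mem_map, Function.Embedding.coeFn_mk] at hi
      rcases hi with ⟨t, ht, z⟩
      apply hs
      rwa [Multiset.eq_of_mem_replicate z]
    · simp_rw [Multiset.sum_sum, Multiset.sum_replicate, Nat.nsmul_eq_mul]
      rw [← hf'.1]
      refine sum_congr rfl fun i hi => Nat.div_mul_cancel ?_
      rcases hf₄ i hi with ⟨w, _, hw₂⟩
      rw [← hw₂]
      exact dvd_mul_left _ _
    · intro i
      simp_rw [Multiset.count_sum', Multiset.count_replicate, sum_ite_eq']
      split_ifs with h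
      · rcases hf₄ i h with ⟨w, hw₁, hw₂⟩
        rwa [← hw₂, Nat.mul_div_cancel _ (hs i h)]
      · exact hc _ h
    · intro i hi
      rw [Multiset.mem_sum] at hi
      rcases hi with ⟨j, hj₁, hj₂⟩
      rwa [Multiset.eq_of_mem_replicate hj₂]
    · ext i
      simp_rw [Multiset.count_sum', Multiset.count_replicate, sum_ite_eq']
      simp only [ne_eq, Multiset.mem_toFinset, not_not, smul_eq_mul, ite_mul,
        zero_mul, Finsupp.coe_mk]
      split_ifs with h
      · apply Nat.div_mul_cancel
        rcases hf₄ i h with ⟨w, _, hw₂⟩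
        apply Dvd.intro_left _ hw₂
      · apply symm
        rw [← Finsupp.notMem_support_iff]
        exact notMem_mono hf'.2 h

theorem partialOddGF_prop [Field α] (n m : ℕ) :
    #{p : n.Partition | ∀ j ∈ p.parts, j ∈ (range m).map mkOdd} = coeff (R := α) n (partialOddGF m) := by
  rw [partialOddGF]
  convert partialGF_prop α n
    ((range m).map mkOdd) _ (fun _ => Set.univ) (fun _ _ => trivial) using 2
  · congr
    simp only [true_and, forall_const, Set.mem_univ]
  · rw [Finset.prod_map]
    simp_rw [num_series']
    congr! 2 with x
    ext k
    constructor
    · rintro ⟨p, rfl⟩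
      refine ⟨p, ⟨⟩, ?_⟩
      apply mul_comm
    rintro ⟨a_w, -, rfl⟩
    apply Dvd.intro_left a_w rfl
  · intro i
    rw [mem_map]
    rintro ⟨a, -, rfl⟩
    exact Nat.succ_pos _

/-- If m is big enough, the partial product's coefficient counts the number of odd partitions -/
theorem oddGF_prop [Field α] (n m : ℕ) (h : n < m * 2) :
    #(Nat.Partition.odds n) = coeff (R := α) n (partialOddGF m) := by
  rw [← partialOddGF_prop, Nat.Partition.odds, Nat.Partition.restricted]
  congr with p
  apply forall₂_congr
  intro i hi
  have hin : i ≤ n := by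
    simpa [p.parts_sum] using Multiset.single_le_sum (fun _ _ => Nat.zero_le _) _ hi
  simp only [mkOdd, exists_prop, mem_range, Function.Embedding.coeFn_mk, mem_map]
  constructor
  · intro hi₂
    have := Nat.mod_add_div i 2
    rw [Nat.not_even_iff] at hi₂
    rw [hi₂, add_comm] at this
    refine ⟨i / 2, ?_, this⟩
    rw [Nat.div_lt_iff_lt_mul zero_lt_two]
    exact lt_of_le_of_lt hin h
  · rintro ⟨a, -, rfl⟩
    rw [even_iff_two_dvd]
    apply Nat.two_not_dvd_two_mul_add_one

theorem partialDistinctGF_prop [CommSemiring α] (n m : ℕ) :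
    #{p : n.Partition |
        p.parts.Nodup ∧ ∀ j ∈ p.parts, j ∈ (range m).map ⟨Nat.succ, Nat.succ_injective⟩} =
      coeff (R := α) n (partialDistinctGF m) := by
  rw [partialDistinctGF]
  convert partialGF_prop α n
    ((range m).map ⟨Nat.succ, Nat.succ_injective⟩) _ (fun _ => {0, 1}) (fun _ _ => Or.inl rfl)
    using 2
  · congr! with p
    rw [Multiset.nodup_iff_count_le_one]
    congr! 1 with i
    rcases Multiset.count i p.parts with (_ | _ | ms) <;> simp
  · simp_rw [Finset.prod_map, two_series]
    congr with i
    simp [Set.image_pair]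
  · simp only [mem_map, Function.Embedding.coeFn_mk]
    rintro i ⟨_, _, rfl⟩
    apply Nat.succ_pos

/-- If m is big enough, the partial product's coefficient counts the number of distinct partitions
-/
theorem distinctGF_prop [CommSemiring α] (n m : ℕ) (h : n < m + 1) :
    #(Nat.Partition.distincts n) = coeff (R := α) n (partialDistinctGF m) := by
  rw [← partialDistinctGF_prop, Nat.Partition.distincts]
  congr with p
  apply (and_iff_left _).symm
  intro i hi
  have : i ≤ n := by
    simpa [p.parts_sum] using Multiset.single_le_sum (fun _ _ => Nat.zero_le _) _ hi
  simp only [mkOdd, exists_prop, mem_range, Function.Embedding.coeFn_mk, mem_map]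
  refine ⟨i - 1, ?_, Nat.succ_pred_eq_of_pos (p.parts_pos hi)⟩
  rw [tsub_lt_iff_right (Nat.one_le_iff_ne_zero.mpr (p.parts_pos hi).ne')]
  exact lt_of_le_of_lt this h

/-- The key proof idea for the partition theorem, showing that the generating functions for both
sequences are ultimately the same (since the factor converges to 0 as m tends to infinity).
It's enough to not take the limit though, and just consider large enough `m`.
-/
theorem same_gf [Field α] (m : ℕ) :
    (partialOddGF m * (range m).prod fun i => 1 - (X : PowerSeries α) ^ (m + i + 1)) =
      partialDistinctGF m := by
  rw [partialOddGF, partialDistinctGF]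
  induction' m with m ih
  · simp
  set! π₀ : PowerSeries α := ∏ i ∈ range m, (1 - X ^ (m + 1 + i + 1)) with hπ₀
  set! π₁ : PowerSeries α := ∏ i ∈ range m, (1 - X ^ (2 * i + 1))⁻¹ with hπ₁
  set! π₂ : PowerSeries α := ∏ i ∈ range m, (1 - X ^ (m + i + 1)) with hπ₂
  set! π₃ : PowerSeries α := ∏ i ∈ range m, (1 + X ^ (i + 1)) with hπ₃
  rw [← hπ₃] at ih
  have h : constantCoeff (R := α) (1 - X ^ (2 * m + 1)) ≠ 0 := by
    rw [RingHom.map_sub, RingHom.map_pow, constantCoeff_one, constantCoeff_X,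
      zero_pow (2 * m).succ_ne_zero, sub_zero]
    exact one_ne_zero
  calc
    (∏ i ∈ range (m + 1), (1 - X ^ (2 * i + 1))⁻¹) *
          ∏ i ∈ range (m + 1), (1 - X ^ (m + 1 + i + 1)) =
        π₁ * (1 - X ^ (2 * m + 1))⁻¹ * (π₀ * (1 - X ^ (m + 1 + m + 1))) := by
      rw [prod_range_succ _ m, ← hπ₁, prod_range_succ _ m, ← hπ₀]
    _ = π₁ * (1 - X ^ (2 * m + 1))⁻¹ * (π₀ * ((1 + X ^ (m + 1)) * (1 - X ^ (m + 1)))) := by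
      rw [← sq_sub_sq, one_pow, add_assoc _ m 1, ← two_mul (m + 1), pow_mul']
    _ = π₀ * (1 - X ^ (m + 1)) * (1 - X ^ (2 * m + 1))⁻¹ * (π₁ * (1 + X ^ (m + 1))) := by ring
    _ =
        (∏ i ∈ range (m + 1), (1 - X ^ (m + 1 + i))) * (1 - X ^ (2 * m + 1))⁻¹ *
          (π₁ * (1 + X ^ (m + 1))) := by
      rw [prod_range_succ', add_zero, hπ₀]; simp_rw [← add_assoc]
    _ = π₂ * (1 - X ^ (m + 1 + m)) * (1 - X ^ (2 * m + 1))⁻¹ * (π₁ * (1 + X ^ (m + 1))) := by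
      rw [add_right_comm, hπ₂, ← prod_range_succ]; simp_rw [add_right_comm]
    _ = π₂ * (1 - X ^ (2 * m + 1)) * (1 - X ^ (2 * m + 1))⁻¹ * (π₁ * (1 + X ^ (m + 1))) := by
      rw [two_mul, add_right_comm _ m 1]
    _ = (1 - X ^ (2 * m + 1)) * (1 - X ^ (2 * m + 1))⁻¹ * π₂ * (π₁ * (1 + X ^ (m + 1))) := by ring
    _ = π₂ * (π₁ * (1 + X ^ (m + 1))) := by rw [PowerSeries.mul_inv_cancel _ h, one_mul]
    _ = π₁ * π₂ * (1 + X ^ (m + 1)) := by ring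
    _ = π₃ * (1 + X ^ (m + 1)) := by rw [ih]
    _ = _ := by rw [prod_range_succ]

theorem same_coeffs [Field α] (m n : ℕ) (h : n ≤ m) :
    coeff (R := α) n (partialOddGF m) = coeff (R := α) n (partialDistinctGF m) := by
  rw [← same_gf, coeff_mul_prod_one_sub_of_lt_order]
  rintro i -
  rw [order_X_pow]
  exact mod_cast Nat.lt_succ_of_le (le_add_right h)

theorem partition_theorem (n : ℕ) : #(Nat.Partition.odds n) = #(Nat.Partition.distincts n) := by
  suffices (#(Nat.Partition.odds n) : ℚ) = #(Nat.Partition.distincts n) from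
    mod_cast this
  rw [distinctGF_prop n (n + 1) (by linarith)]
  rw [oddGF_prop n (n + 1) (by linarith)]
  apply same_coeffs (n + 1) n n.le_succ

end

end Theorems100

section P6
open Finset PowerSeries Theorems100

noncomputable def G : ℚ⟦X⟧ :=
  X ^ 3 * (1 - X ^ 2 : ℚ⟦X⟧)⁻¹ + X ^ 2 * (1 - X ^ 4 : ℚ⟦X⟧)⁻¹

noncomputable def gval (j : ℕ) : ℚ :=
  (if ¬Even j ∧ 3 ≤ j then 1 else 0) + (if j % 4 = 2 then 1 else 0)

lemma coeff_G (j : ℕ) : coeff (R := ℚ) j G = gval j := by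
  have h2 : (1 - X ^ 2 : ℚ⟦X⟧)⁻¹ = indicatorSeries ℚ {k | 2 ∣ k} := by
    have := num_series' (α := ℚ) 1
    norm_num at this
    exact this
  have h4 : (1 - X ^ 4 : ℚ⟦X⟧)⁻¹ = indicatorSeries ℚ {k | 4 ∣ k} := by
    have := num_series' (α := ℚ) 3
    norm_num at this
    exact this
  rw [G, gval, map_add, h2, h4, mul_comm (X ^ 3 : ℚ⟦X⟧), mul_comm (X ^ 2 : ℚ⟦X⟧),
    PowerSeries.coeff_mul_X_pow', PowerSeries.coeff_mul_X_pow']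
  congr 1
  · by_cases h3 : 3 ≤ j
    · rw [if_pos h3, coeff_indicator]
      have : (2 ∣ j - 3) ↔ (¬Even j ∧ 3 ≤ j) := by
        rw [Nat.even_iff]
        omega
      simp only [Set.mem_setOf_eq]
      by_cases hd : 2 ∣ j - 3
      · rw [if_pos hd, if_pos (this.mp hd)]
      · rw [if_neg hd, if_neg (fun h => hd (this.mpr h))]
    · rw [if_neg h3, if_neg (fun h => h3 h.2)]
  · by_cases h3 : 2 ≤ j
    · rw [if_pos h3, coeff_indicator]
      have : (4 ∣ j - 2) ↔ j % 4 = 2 := by omega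
      simp only [Set.mem_setOf_eq]
      by_cases hd : 4 ∣ j - 2
      · rw [if_pos hd, if_pos (this.mp hd)]
      · rw [if_neg hd, if_neg (fun h => hd (this.mpr h))]
    · rw [if_neg h3, if_neg (by omega)]

lemma key_algebra :
    (1 + X) * (1 + X ^ 2) * G =
      ((X ^ 2 + 2 * X ^ 3 + X ^ 4 + X ^ 5 + X ^ 6) : ℚ⟦X⟧) * (1 - X ^ 2)⁻¹ := by
  have hc2 : constantCoeff (R := ℚ) (1 - X ^ 2) ≠ 0 := by
    simp [zero_pow]
  have hc4 : constantCoeff (R := ℚ) (1 - X ^ 4) ≠ 0 := by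
    simp [zero_pow]
  have hne2 : (1 - X ^ 2 : ℚ⟦X⟧) ≠ 0 := fun h => hc2 (by rw [h]; simp)
  have ha : (1 - X ^ 2 : ℚ⟦X⟧)⁻¹ = (1 + X ^ 2) * (1 - X ^ 4)⁻¹ := by
    apply mul_left_cancel₀ hne2
    rw [PowerSeries.mul_inv_cancel _ hc2]
    have h1 : (1 - X ^ 2 : ℚ⟦X⟧) * ((1 + X ^ 2) * (1 - X ^ 4)⁻¹)
        = ((1 - X ^ 2) * (1 + X ^ 2)) * (1 - X ^ 4)⁻¹ := by ring
    rw [h1, show ((1 - X ^ 2 : ℚ⟦X⟧) * (1 + X ^ 2)) = 1 - X ^ 4 from by ring,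
      PowerSeries.mul_inv_cancel _ hc4]
  rw [G, ha]
  ring

end P6

section Final
open Finset PowerSeries Theorems100

theorem stmt13 : ∀ n : ℕ,
    (PowerSeries.coeff (R := ℚ) n) (PowerSeries.mk fun m => (b 2 2 m : ℚ)) =
      (PowerSeries.coeff (R := ℚ) n)
        ((∏ m ∈ Finset.range (n + 1), (1 + (X : ℚ⟦X⟧) ^ (m + 3))) *
          (X ^ 2 + 2 * X ^ 3 + X ^ 4 + X ^ 5 + X ^ 6) * (1 - X ^ 2)⁻¹) := by
  intro n
  rw [coeff_mk]
  set M := n + 3 with hM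
  set Dn : ℚ⟦X⟧ := ∏ m ∈ Finset.range (n + 1), (1 + (X : ℚ⟦X⟧) ^ (m + 3)) with hDn
  -- Step α : cast the combinatorial formula
  have stepA : (b 2 2 n : ℚ) = ∑ j ∈ range (n + 1), (podd (n - j) : ℚ) * gval j := by
    rw [b22_formula]
    push_cast
    rw [← Finset.sum_add_distrib]
    apply Finset.sum_congr rfl
    intro j _
    rw [gval, mul_add]
    congr 1
    · rw [mul_ite, mul_one, mul_zero]
    · rw [mul_ite, mul_one, mul_zero]
  -- Step β : identify with a power series coefficient
  have stepB : coeff (R := ℚ) n (partialOddGF M * G) =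
      ∑ j ∈ range (n + 1), (podd (n - j) : ℚ) * gval j := by
    rw [coeff_mul, Finset.Nat.sum_antidiagonal_eq_sum_range_succ_mk]
    have h1 : ∀ k ∈ range (n + 1),
        coeff (R := ℚ) k (partialOddGF M) * coeff (R := ℚ) (n - k) G
          = (podd k : ℚ) * gval (n - k) := by
      intro k hk
      rw [Finset.mem_range] at hk
      rw [coeff_G, ← oddGF_prop k M (by omega)]
      rfl
    rw [Finset.sum_congr rfl h1]
    rw [← Finset.sum_range_reflect (fun k => (podd k : ℚ) * gval (n - k)) (n + 1)]
    apply Finset.sum_congr rfl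
    intro j hj
    rw [Finset.mem_range] at hj
    have h : n - (n - j) = j := by omega
    simp only [Nat.add_sub_cancel]
    rw [h]
  -- Step γ : swap odd for distinct
  have stepC : coeff (R := ℚ) n (partialOddGF M * G) = coeff (R := ℚ) n (partialDistinctGF M * G) := by
    rw [← same_gf M]
    have h1 : (partialOddGF M * (range M).prod fun i => 1 - (X : ℚ⟦X⟧) ^ (M + i + 1)) * G
        = (partialOddGF M * G) * ∏ i ∈ range M, (1 - (X : ℚ⟦X⟧) ^ (M + i + 1)) := by
      ring
    rw [h1, PowerSeries.coeff_mul_prod_one_sub_of_lt_order]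
    intro i _
    rw [order_X_pow]
    exact_mod_cast by omega
  -- Step δ : split off the first two factors of the distinct product
  have stepD : partialDistinctGF M = Dn * (1 + X ^ 2) * (1 + X) := by
    rw [partialDistinctGF, hM, Finset.prod_range_succ', Finset.prod_range_succ']
    rw [hDn]
    norm_num
  -- Conclude
  rw [stepA, ← stepB, stepC, stepD]
  congr 1
  have h2 : Dn * (1 + X ^ 2) * (1 + X) * G = Dn * ((1 + X) * (1 + X ^ 2) * G) := by ring
  rw [h2, key_algebra]
  ring
end Final
end

section
/- Every coefficient of the formal power series ∏_{m≥1}(1+q^m+q^{2m}) − (1+q+q²)(1+q²+q⁴)·∏_{m≥3}(1+q^m) is nonnegative, and the coefficients of qⁿ for 0 ≤ n ≤ 5 are zero. -/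
open Finset PowerSeries

private def Pos (f : ℤ⟦X⟧) : Prop := ∀ n, 0 ≤ (coeff (R := ℤ) n) f

private lemma pos_add {f g : ℤ⟦X⟧} (hf : Pos f) (hg : Pos g) : Pos (f + g) := by
  intro n; rw [map_add]; exact add_nonneg (hf n) (hg n)

private lemma pos_one : Pos 1 := by
  intro n; rw [coeff_one]; positivity

private lemma pos_X_pow (k : ℕ) : Pos ((X : ℤ⟦X⟧) ^ k) := by
  intro n; rw [coeff_X_pow]; positivity

private lemma pos_mul {f g : ℤ⟦X⟧} (hf : Pos f) (hg : Pos g) : Pos (f * g) := by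
  intro n; rw [coeff_mul]
  exact Finset.sum_nonneg fun p _ => mul_nonneg (hf p.1) (hg p.2)

private lemma pos_prod {ι : Type*} {s : Finset ι} {f : ι → ℤ⟦X⟧}
    (h : ∀ i ∈ s, Pos (f i)) : Pos (∏ i ∈ s, f i) := by
  classical
  induction s using Finset.induction with
  | empty => simpa using pos_one
  | @insert a s ha ih =>
    rw [Finset.prod_insert ha]
    exact pos_mul (h a (Finset.mem_insert_self a s))
      (ih fun i hi => h i (Finset.mem_insert_of_mem hi))

private lemma pos_prod_sub {ι : Type*} {s : Finset ι} {f g : ι → ℤ⟦X⟧}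
    (hg : ∀ i ∈ s, Pos (g i)) (h : ∀ i ∈ s, Pos (f i - g i)) :
    Pos (∏ i ∈ s, f i - ∏ i ∈ s, g i) := by
  classical
  induction s using Finset.induction with
  | empty => intro k; simp
  | @insert a s ha ih =>
    rw [Finset.prod_insert ha, Finset.prod_insert ha]
    have key : f a * ∏ i ∈ s, f i - g a * ∏ i ∈ s, g i =
        f a * (∏ i ∈ s, f i - ∏ i ∈ s, g i) + (f a - g a) * ∏ i ∈ s, g i := by ring
    rw [key]
    have hfa : Pos (f a) := by
      have := pos_add (h a (Finset.mem_insert_self a s)) (hg a (Finset.mem_insert_self a s))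
      simpa using this
    exact pos_add
      (pos_mul hfa (ih (fun i hi => hg i (Finset.mem_insert_of_mem hi))
        (fun i hi => h i (Finset.mem_insert_of_mem hi))))
      (pos_mul (h a (Finset.mem_insert_self a s))
        (pos_prod fun i hi => hg i (Finset.mem_insert_of_mem hi)))

private def Z (N : ℕ) (f : ℤ⟦X⟧) : Prop := ∀ j ≤ N, (coeff (R := ℤ) j) f = 0

private lemma z_mul {N : ℕ} {f g : ℤ⟦X⟧} (hf : Z N f) : Z N (g * f) := by
  intro j hj; rw [coeff_mul]
  apply Finset.sum_eq_zero
  intro p hp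
  rw [Finset.HasAntidiagonal.mem_antidiagonal] at hp
  rw [hf p.2 (le_trans (by omega) hj), mul_zero]

private lemma z_add {N : ℕ} {f g : ℤ⟦X⟧} (hf : Z N f) (hg : Z N g) : Z N (f + g) := by
  intro j hj; rw [map_add, hf j hj, hg j hj, add_zero]

private lemma z_prod_sub {N : ℕ} {ι : Type*} {s : Finset ι} {f g : ι → ℤ⟦X⟧}
    (h : ∀ i ∈ s, Z N (f i - g i)) : Z N (∏ i ∈ s, f i - ∏ i ∈ s, g i) := by
  classical
  induction s using Finset.induction with
  | empty => intro j hj; simp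
  | @insert a s ha ih =>
    rw [Finset.prod_insert ha, Finset.prod_insert ha]
    have key : f a * ∏ i ∈ s, f i - g a * ∏ i ∈ s, g i =
        f a * (∏ i ∈ s, f i - ∏ i ∈ s, g i) + (∏ i ∈ s, g i) * (f a - g a) := by ring
    rw [key]
    exact z_add (z_mul (ih fun i hi => h i (Finset.mem_insert_of_mem hi)))
      (z_mul (h a (Finset.mem_insert_self a s)))

private lemma coeff_mul_high {n k : ℕ} (P : ℤ⟦X⟧) (hk : n < k) :
    (coeff (R := ℤ) n) (P * (1 + X ^ k + X ^ (2 * k))) = (coeff (R := ℤ) n) P := by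
  rw [mul_add, mul_add, mul_one, map_add, map_add, coeff_mul_X_pow', coeff_mul_X_pow']
  rw [if_neg (by omega), if_neg (by omega)]
  ring

theorem stmt14 : ∀ n : ℕ,
    0 ≤ (PowerSeries.coeff (R := ℤ) n) (∏ m ∈ Finset.range (n + 1),
            (1 + (X : ℤ⟦X⟧) ^ (m + 1) + X ^ (2 * (m + 1)))) -
          (PowerSeries.coeff (R := ℤ) n) ((1 + X + X ^ 2) * (1 + X ^ 2 + X ^ 4) *
            ∏ m ∈ Finset.range (n + 1), (1 + (X : ℤ⟦X⟧) ^ (m + 3))) ∧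
      (n ≤ 5 →
        (PowerSeries.coeff (R := ℤ) n) (∏ m ∈ Finset.range (n + 1),
            (1 + (X : ℤ⟦X⟧) ^ (m + 1) + X ^ (2 * (m + 1)))) =
          (PowerSeries.coeff (R := ℤ) n) ((1 + X + X ^ 2) * (1 + X ^ 2 + X ^ 4) *
            ∏ m ∈ Finset.range (n + 1), (1 + (X : ℤ⟦X⟧) ^ (m + 3)))) := by
  intro n
  set A : ℕ → ℤ⟦X⟧ := fun m => 1 + (X : ℤ⟦X⟧) ^ (m + 1) + X ^ (2 * (m + 1)) with hA
  set U : ℤ⟦X⟧ := (1 + X + X ^ 2) * (1 + X ^ 2 + X ^ 4) with hU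
  set P : ℤ⟦X⟧ := ∏ m ∈ Finset.range (n + 1), (1 + (X : ℤ⟦X⟧) ^ (m + 3) + X ^ (2 * (m + 3)))
    with hP
  set Q : ℤ⟦X⟧ := ∏ m ∈ Finset.range (n + 1), (1 + (X : ℤ⟦X⟧) ^ (m + 3)) with hQ
  -- Step 1: extend LHS product to range (n+3) without changing coeff n
  have ext : (coeff (R := ℤ) n) (∏ m ∈ Finset.range (n + 1), A m) =
      (coeff (R := ℤ) n) (∏ m ∈ Finset.range (n + 3), A m) := by
    have h3 : n + 3 = n + 1 + 1 + 1 := by ring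
    rw [h3, Finset.prod_range_succ A (n + 1 + 1), Finset.prod_range_succ A (n + 1)]
    rw [hA]
    simp only
    rw [coeff_mul_high _ (by omega), coeff_mul_high _ (by omega)]
  -- Step 2: split off the first two factors
  have split : ∏ m ∈ Finset.range (n + 3), A m = U * P := by
    rw [show n + 3 = 2 + (n + 1) from by ring, Finset.prod_range_add]
    congr 1
    · rw [hU, hA]
      simp [Finset.prod_range_succ]
    · rw [hP]
      apply Finset.prod_congr rfl
      intro x _
      rw [hA]
      simp only
      rw [show 2 + x + 1 = x + 3 from by omega]
  -- Positivity of the difference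
  have hposPQ : Pos (P - Q) := by
    rw [hP, hQ]
    apply pos_prod_sub
    · intro i _
      exact pos_add pos_one (pos_X_pow _)
    · intro i _
      have : (1 + (X : ℤ⟦X⟧) ^ (i + 3) + X ^ (2 * (i + 3))) - (1 + X ^ (i + 3)) =
          X ^ (2 * (i + 3)) := by ring
      rw [this]
      exact pos_X_pow _
  have hposU : Pos U := by
    rw [hU]
    have hX : Pos (X : ℤ⟦X⟧) := by
      have := pos_X_pow 1
      simpa using this
    exact pos_mul (pos_add (pos_add pos_one hX) (pos_X_pow 2))
      (pos_add (pos_add pos_one (pos_X_pow 2)) (pos_X_pow 4))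
  have hdiff : (coeff (R := ℤ) n) (∏ m ∈ Finset.range (n + 1), A m) - (coeff (R := ℤ) n) (U * Q) =
      (coeff (R := ℤ) n) (U * (P - Q)) := by
    rw [ext, split, mul_sub, map_sub]
  have hZ : Z 5 (U * (P - Q)) := by
    apply z_mul
    rw [hP, hQ]
    apply z_prod_sub
    intro i _
    intro j hj
    have : (1 + (X : ℤ⟦X⟧) ^ (i + 3) + X ^ (2 * (i + 3))) - (1 + X ^ (i + 3)) =
        X ^ (2 * (i + 3)) := by ring
    rw [this, coeff_X_pow, if_neg (by omega)]
  constructor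
  · rw [hdiff]  -- hope the goal matches
    exact pos_mul hposU hposPQ n
  · intro hn
    have h0 := hZ n hn
    linarith [hdiff]
end

section
/- Every coefficient of the formal power series ∏_{m≥1}(1+q^m+q^{2m}) is at least the corresponding coefficient of (1+q+q²)(1+q²+q⁴)·∏_{m≥3}(1+q^m). -/
open Finset PowerSeries

lemma nn_one_add_pow (a : ℕ) : ∀ k, 0 ≤ coeff (R := ℤ) k (1 + (X:ℤ⟦X⟧)^a) := by
  intro k
  simp only [map_add, coeff_one, coeff_X_pow]
  split_ifs <;> norm_num

lemma nn_trin (a b : ℕ) : ∀ k, 0 ≤ coeff (R := ℤ) k (1 + (X:ℤ⟦X⟧)^a + X^b) := by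
  intro k
  simp only [map_add, coeff_one, coeff_X_pow]
  split_ifs <;> norm_num

lemma le_one_trin (a b : ℕ) : ∀ k,
    coeff (R := ℤ) k (1 + (X:ℤ⟦X⟧)^a) ≤ coeff (R := ℤ) k (1 + (X:ℤ⟦X⟧)^a + X^b) := by
  intro k
  simp only [map_add, coeff_one, coeff_X_pow]
  split_ifs <;> norm_num

lemma mul_nn_le {f g f' g' : ℤ⟦X⟧} (hf : ∀ k, 0 ≤ coeff (R := ℤ) k f)
    (hg : ∀ k, 0 ≤ coeff (R := ℤ) k g)
    (hff' : ∀ k, coeff (R := ℤ) k f ≤ coeff (R := ℤ) k f')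
    (hgg' : ∀ k, coeff (R := ℤ) k g ≤ coeff (R := ℤ) k g') :
    (∀ k, 0 ≤ coeff (R := ℤ) k (f*g)) ∧ ∀ k, coeff (R := ℤ) k (f*g) ≤ coeff (R := ℤ) k (f'*g') := by
  constructor
  · intro k
    rw [coeff_mul]
    exact Finset.sum_nonneg fun p _ => mul_nonneg (hf p.1) (hg p.2)
  · intro k
    rw [coeff_mul, coeff_mul]
    refine Finset.sum_le_sum fun p _ => ?_
    exact mul_le_mul (hff' p.1) (hgg' p.2) (hg p.2) (le_trans (hf p.1) (hff' p.1))

lemma prod_nn_le (f g : ℕ → ℤ⟦X⟧) (s : Finset ℕ)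
    (h : ∀ m ∈ s, (∀ k, 0 ≤ coeff (R := ℤ) k (f m)) ∧ ∀ k, coeff (R := ℤ) k (f m) ≤ coeff (R := ℤ) k (g m)) :
    (∀ k, 0 ≤ coeff (R := ℤ) k (∏ m ∈ s, f m)) ∧
      ∀ k, coeff (R := ℤ) k (∏ m ∈ s, f m) ≤ coeff (R := ℤ) k (∏ m ∈ s, g m) := by
  induction s using Finset.cons_induction with
  | empty =>
    constructor <;> intro k <;> simp [coeff_one] <;> split_ifs <;> norm_num
  | cons a s ha ih =>
    simp only [Finset.prod_cons]
    have h1 := h a (Finset.mem_cons_self a s)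
    have h2 := ih fun m hm => h m (Finset.mem_cons_of_mem hm)
    exact mul_nn_le h1.1 h2.1 h1.2 h2.2

lemma coeff_mul_trin {n k j : ℕ} (hk : n < k) (hj : n < j) (P : ℤ⟦X⟧) :
    coeff (R := ℤ) n (P * (1 + (X:ℤ⟦X⟧)^k + X^j)) = coeff (R := ℤ) n P := by
  rw [mul_add, mul_add, mul_one, map_add, map_add, coeff_mul_X_pow', coeff_mul_X_pow']
  rw [if_neg (by omega), if_neg (by omega)]
  ring

theorem stmt15 : ∀ n : ℕ,
    (PowerSeries.coeff (R := ℤ) n) ((1 + X + X ^ 2) * (1 + X ^ 2 + X ^ 4) *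
        ∏ m ∈ Finset.range (n + 1), (1 + (X : ℤ⟦X⟧) ^ (m + 3))) ≤
      (PowerSeries.coeff (R := ℤ) n) (∏ m ∈ Finset.range (n + 1),
        (1 + (X : ℤ⟦X⟧) ^ (m + 1) + X ^ (2 * (m + 1)))) := by
  intro n
  set f : ℕ → ℤ⟦X⟧ := fun m => 1 + (X:ℤ⟦X⟧)^(m+1) + X^(2*(m+1)) with hf
  have key : coeff (R := ℤ) n (∏ m ∈ Finset.range (n+1), f m)
      = coeff (R := ℤ) n (∏ m ∈ Finset.range (n+3), f m) := by
    rw [Finset.prod_range_succ f (n+2), Finset.prod_range_succ f (n+1)]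
    simp only [hf]
    rw [coeff_mul_trin (by omega) (by omega), coeff_mul_trin (by omega) (by omega)]
  rw [key]
  have hinner : (∏ x ∈ Finset.range (n+1), f (x+1+1))
      = ∏ m ∈ Finset.range (n+1), (1 + (X:ℤ⟦X⟧)^(m+3) + X^(2*(m+3))) := by
    exact Finset.prod_congr rfl fun m _ => by simp only [hf]
  have reindex : ∏ m ∈ Finset.range (n+3), f m
      = (1 + X + X^2) * (1 + X^2 + X^4) *
        ∏ m ∈ Finset.range (n+1), (1 + (X:ℤ⟦X⟧)^(m+3) + X^(2*(m+3))) := by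
    rw [Finset.prod_range_succ' f (n+2), Finset.prod_range_succ' (fun x => f (x+1)) (n+1)]
    have h0 : f 0 = 1 + X + X^2 := by norm_num [hf]
    have h1 : f 1 = 1 + X^2 + X^4 := by norm_num [hf]
    rw [h0, h1, hinner]
    ring
  rw [reindex]
  have hAB : ∀ k, 0 ≤ coeff (R := ℤ) k ((1+X+X^2) * (1+(X:ℤ⟦X⟧)^2+X^4)) :=
    (mul_nn_le (by simpa using nn_trin 1 2) (nn_trin 2 4)
      (fun k => le_refl _) (fun k => le_refl _)).1
  have hP := prod_nn_le (fun m => 1 + (X:ℤ⟦X⟧)^(m+3))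
    (fun m => 1 + (X:ℤ⟦X⟧)^(m+3) + X^(2*(m+3))) (Finset.range (n+1))
    (fun m _ => ⟨nn_one_add_pow (m+3), le_one_trin (m+3) (2*(m+3))⟩)
  exact (mul_nn_le hAB hP.1 (fun k => le_refl _) hP.2).2 n
end

section
/- For every n ≥ 4, the coefficient of qⁿ in ∏_{m≥3}(1+q^m) · (q² + 3q⁴ + q⁶ − q³) is nonnegative. -/
open Finset PowerSeries

theorem stmt16 : ∀ n : ℕ, 4 ≤ n →
    0 ≤ (PowerSeries.coeff (R := ℤ) n)
        ((∏ m ∈ Finset.range (n + 1), (1 + (X : ℤ⟦X⟧) ^ (m + 3))) *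
          (X ^ 2 + 3 * X ^ 4 + X ^ 6 - X ^ 3)) := by
  intro n hn
  set P : ℤ⟦X⟧ := ∏ m ∈ Finset.range (n + 1), (1 + (X : ℤ⟦X⟧) ^ (m + 3)) with hP
  -- coefficient formula
  have hPsum : P = ∑ t ∈ (Finset.range (n+1)).powerset, (X : ℤ⟦X⟧) ^ (∑ m ∈ t, (m+3)) := by
    rw [hP]
    have h1 : ∀ m ∈ Finset.range (n+1), (1 + (X : ℤ⟦X⟧) ^ (m+3)) = ((X : ℤ⟦X⟧) ^ (m+3) + 1) := by
      intro m _; ring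
    rw [Finset.prod_congr rfl h1, Finset.prod_add]
    refine Finset.sum_congr rfl fun t ht => ?_
    simp [Finset.prod_pow_eq_pow_sum]
  have hc : ∀ k, (PowerSeries.coeff (R := ℤ) k) P =
      ((((Finset.range (n+1)).powerset).filter (fun t => ∑ m ∈ t, (m+3) = k)).card : ℤ) := by
    intro k
    rw [hPsum, map_sum]
    rw [Finset.card_filter]
    push_cast
    refine Finset.sum_congr rfl fun t ht => ?_
    rw [PowerSeries.coeff_X_pow]
    simp [eq_comm]
  have hnonneg : ∀ k, 0 ≤ (PowerSeries.coeff (R := ℤ) k) P := by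
    intro k; rw [hc]; positivity
  -- monotonicity: coeff (n-3) ≤ coeff (n-2)
  have hmono : (PowerSeries.coeff (R := ℤ) (n-3)) P ≤ (PowerSeries.coeff (R := ℤ) (n-2)) P := by
    rw [hc, hc]
    have hcard : ((Finset.range (n+1)).powerset.filter (fun t => ∑ m ∈ t, (m+3) = n-3)).card ≤
        ((Finset.range (n+1)).powerset.filter (fun t => ∑ m ∈ t, (m+3) = n-2)).card := by
      apply Finset.card_le_card_of_injOn
        (fun t => insert (t.sup id + 1) (t.erase (t.sup id)))
      · -- maps to
        intro t ht
        simp only [Finset.mem_coe, Finset.mem_filter, Finset.mem_powerset] at ht ⊢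
        obtain ⟨hsub, hsum⟩ := ht
        have htne : t.Nonempty := by
          rcases Finset.eq_empty_or_nonempty t with h | h
          · exfalso; rw [h] at hsum; simp at hsum; omega
          · exact h
        set M := t.sup id with hM
        have hMmem : M ∈ t := by
          obtain ⟨a, ha, hae⟩ := Finset.exists_mem_eq_sup t htne id
          rw [hM, hae]; exact ha
        have hle : ∀ x ∈ t, x ≤ M := fun x hx => Finset.le_sup (f := id) hx
        have hMbig : M + 3 ≤ n - 3 := by
          rw [← hsum]
          exact Finset.single_le_sum (f := fun m => m + 3) (fun i _ => Nat.zero_le _) hMmem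
        have hsumerase : (∑ m ∈ t.erase M, (m+3)) + (M+3) = n - 3 := by
          rw [Finset.sum_erase_add _ _ hMmem]; exact hsum
        constructor
        · intro x hx
          rcases Finset.mem_insert.mp hx with h | h
          · rw [h]; rw [Finset.mem_range]; omega
          · exact hsub (Finset.mem_of_mem_erase h)
        · rw [Finset.sum_insert (by
            intro hmem
            exact absurd (hle _ (Finset.mem_of_mem_erase hmem)) (by omega))]
          omega
      · -- injective
        intro t1 h1 t2 h2 heq
        simp only [Finset.coe_filter, Set.mem_setOf_eq, Finset.mem_powerset] at h1 h2
        have recover : ∀ t : Finset ℕ, t ⊆ Finset.range (n+1) → (∑ m ∈ t, (m+3) = n-3) →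
            insert (t.sup id) ((insert (t.sup id + 1) (t.erase (t.sup id))).erase (t.sup id + 1)) = t := by
          intro t hsub hsum
          have htne : t.Nonempty := by
            rcases Finset.eq_empty_or_nonempty t with h | h
            · exfalso; rw [h] at hsum; simp at hsum; omega
            · exact h
          set M := t.sup id with hM
          have hMmem : M ∈ t := by
            obtain ⟨a, ha, hae⟩ := Finset.exists_mem_eq_sup t htne id
            rw [hM, hae]; exact ha
          have hle : ∀ x ∈ t, x ≤ M := fun x hx => Finset.le_sup (f := id) hx
          have hnm : (M+1) ∉ t.erase M := by
            intro hmem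
            exact absurd (hle _ (Finset.mem_of_mem_erase hmem)) (by omega)
          rw [Finset.erase_insert hnm, Finset.insert_erase hMmem]
        have hsup : ∀ t : Finset ℕ, t.Nonempty →
            (insert (t.sup id + 1) (t.erase (t.sup id))).sup id = t.sup id + 1 := by
          intro t htne
          rw [Finset.sup_insert]
          have : (t.erase (t.sup id)).sup id ≤ t.sup id :=
            Finset.sup_mono (Finset.erase_subset _ _)
          simp only [id]
          omega
        have hne : ∀ t : Finset ℕ, t ⊆ Finset.range (n+1) → (∑ m ∈ t, (m+3) = n-3) →
            t.Nonempty := by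
          intro t _ hsum
          rcases Finset.eq_empty_or_nonempty t with h | h
          · exfalso; rw [h] at hsum; simp at hsum; omega
          · exact h
        have e1 := hsup t1 (hne t1 h1.1 h1.2)
        have e2 := hsup t2 (hne t2 h2.1 h2.2)
        have hsupeq : t1.sup id = t2.sup id := by
          have := congrArg (fun s => s.sup id) heq
          simp only at this
          rw [e1, e2] at this
          omega
        calc t1 = insert (t1.sup id) ((insert (t1.sup id + 1) (t1.erase (t1.sup id))).erase (t1.sup id + 1)) :=
              (recover t1 h1.1 h1.2).symm
          _ = insert (t2.sup id) ((insert (t2.sup id + 1) (t2.erase (t2.sup id))).erase (t2.sup id + 1)) := by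
              simp only at heq
              rw [hsupeq] at heq
              rw [hsupeq, heq]
          _ = t2 := recover t2 h2.1 h2.2
    exact_mod_cast hcard
  -- final computation
  have hring : P * ((X:ℤ⟦X⟧) ^ 2 + 3 * X ^ 4 + X ^ 6 - X ^ 3) =
      P * X ^ 2 + (P * X ^ 4 + P * X ^ 4 + P * X ^ 4) + P * X ^ 6 - P * X ^ 3 := by
    ring
  rw [hring, map_sub, map_add, map_add, map_add, map_add]
  rw [PowerSeries.coeff_mul_X_pow', PowerSeries.coeff_mul_X_pow',
    PowerSeries.coeff_mul_X_pow', PowerSeries.coeff_mul_X_pow']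
  have h2 : (2:ℕ) ≤ n := by omega
  have h3 : (3:ℕ) ≤ n := by omega
  have h4 : (4:ℕ) ≤ n := hn
  rw [if_pos h2, if_pos h3, if_pos h4]
  by_cases h6 : (6:ℕ) ≤ n
  · rw [if_pos h6]
    have := hnonneg (n-4)
    have := hnonneg (n-6)
    linarith
  · rw [if_neg h6]
    have := hnonneg (n-4)
    linarith
end

section
/- For all n > 4, ∑_{i=0}^{n−5} d_3(i) ≥ d_3(n−1), where d_3(m) counts partitions of m into distinct parts each at least 3 and d_3(0) = 1. -/
open Finset PowerSeries

/-- `d3 m` : the number of partitions of `m` into distinct parts, all of size at least `3`.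
In particular `d3 0 = 1` (the empty partition). -/
def d3 (m : ℕ) : ℕ :=
  (Finset.univ.filter (fun p : m.Partition => p.parts.Nodup ∧ ∀ i ∈ p.parts, 3 ≤ i)).card

private lemma sup_mem_of_ne_zero {s : Multiset ℕ} (hs : s ≠ 0) : s.sup ∈ s := by
  induction s using Multiset.induction with
  | empty => simp at hs
  | cons a t ih =>
    rcases eq_or_ne t 0 with rfl | ht
    · simp
    · rcases le_total (t.sup) a with h | h
      · simp [Multiset.sup_cons, sup_eq_left.mpr h]
      · rw [Multiset.sup_cons, sup_eq_right.mpr h]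
        exact Multiset.mem_cons_of_mem (ih ht)

/-- delete-largest-part map -/
noncomputable def chop (N : ℕ) (p : N.Partition) : Σ i : ℕ, i.Partition :=
  if h : p.parts.sup ∈ p.parts then
    ⟨N - p.parts.sup,
      { parts := p.parts.erase p.parts.sup
        parts_pos := fun hj => p.parts_pos (Multiset.mem_of_mem_erase hj)
        parts_sum := by
          have h1 : p.parts.sup + (p.parts.erase p.parts.sup).sum = N := by
            rw [← Multiset.sum_cons, Multiset.cons_erase h, p.parts_sum]
          omega }⟩
  else ⟨0, ⟨0, by simp, by simp⟩⟩

theorem stmt18 : ∀ n : ℕ, 4 < n → d3 (n - 1) ≤ ∑ i ∈ Finset.range (n - 4), d3 i := by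
  intro n hn
  classical
  have key : d3 (n-1) ≤ ((Finset.range (n-4)).sigma
      (fun i => Finset.univ.filter
        (fun p : i.Partition => p.parts.Nodup ∧ ∀ j ∈ p.parts, 3 ≤ j))).card := by
    unfold d3
    apply Finset.card_le_card_of_injOn (chop (n-1))
    · intro p hp
      simp only [Finset.mem_coe, Finset.mem_filter, Finset.mem_univ, true_and] at hp
      obtain ⟨hnd, h3⟩ := hp
      have hne : p.parts ≠ 0 := by
        intro h0
        have := p.parts_sum
        rw [h0] at this
        simp at this
        omega
      have hmem : p.parts.sup ∈ p.parts := sup_mem_of_ne_zero hne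
      set k := p.parts.sup with hk
      have hsum : k + (p.parts.erase k).sum = n - 1 := by
        rw [← Multiset.sum_cons, Multiset.cons_erase hmem, p.parts_sum]
      have hk3 : 3 ≤ k := h3 _ hmem
      -- k ≥ 4
      have hk4 : 4 ≤ k := by
        by_contra hlt
        have hk3' : k = 3 := by omega
        -- all parts ≤ 3 and ≥ 3, nodup ⇒ erase is empty
        have herase : p.parts.erase k = 0 := by
          by_contra hne2
          obtain ⟨a, ha⟩ := Multiset.exists_mem_of_ne_zero hne2
          have ha' : a ∈ p.parts := Multiset.mem_of_mem_erase ha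
          have : a ≤ k := Multiset.le_sup ha'
          have : a = 3 := by have := h3 a ha'; omega
          rw [this, ← hk3'] at ha
          exact hnd.notMem_erase ha
        rw [herase] at hsum
        simp at hsum
        omega
      simp only [chop, ← hk, dif_pos hmem, Finset.mem_coe, Finset.mem_sigma, Finset.mem_range,
        Finset.mem_filter, Finset.mem_univ, true_and]
      exact ⟨by omega, hnd.erase _, fun j hj => h3 j (Multiset.mem_of_mem_erase hj)⟩
    · intro p₁ hp₁ p₂ hp₂ hf
      simp only [Finset.coe_filter, Set.mem_setOf_eq, Finset.mem_univ, true_and] at hp₁ hp₂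
      have hne₁ : p₁.parts ≠ 0 := by
        intro h0; have := p₁.parts_sum; rw [h0] at this; simp at this; omega
      have hne₂ : p₂.parts ≠ 0 := by
        intro h0; have := p₂.parts_sum; rw [h0] at this; simp at this; omega
      have hm₁ : p₁.parts.sup ∈ p₁.parts := sup_mem_of_ne_zero hne₁
      have hm₂ : p₂.parts.sup ∈ p₂.parts := sup_mem_of_ne_zero hne₂
      have hs₁ : p₁.parts.sup + (p₁.parts.erase p₁.parts.sup).sum = n - 1 := by
        rw [← Multiset.sum_cons, Multiset.cons_erase hm₁, p₁.parts_sum]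
      have hs₂ : p₂.parts.sup + (p₂.parts.erase p₂.parts.sup).sum = n - 1 := by
        rw [← Multiset.sum_cons, Multiset.cons_erase hm₂, p₂.parts_sum]
      simp only [chop, dif_pos hm₁, dif_pos hm₂] at hf
      have hfst : n - 1 - p₁.parts.sup = n - 1 - p₂.parts.sup :=
        congrArg (fun x : Σ i : ℕ, i.Partition => x.1) hf
      have hsnd : p₁.parts.erase p₁.parts.sup = p₂.parts.erase p₂.parts.sup :=
        congrArg (fun x : Σ i : ℕ, i.Partition => x.2.parts) hf
      have hkk : p₁.parts.sup = p₂.parts.sup := by omega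
      apply Nat.Partition.ext
      rw [← Multiset.cons_erase hm₁, ← Multiset.cons_erase hm₂, hsnd, hkk]
  rw [Finset.card_sigma] at key
  simpa [d3] using key
end
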